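/- Suppose for each integer r there is a polynomial θ_r(q) with only finitely many nonzero, and for all L ≥ 0 define F(L,q) = ∑_{j=-∞}^{∞} θ_j(q) [2L choose L - j]_q. Then for all L ≥ 0: ∑_{r=0}^{L} (q^{r^2} (q;q)_{2L} / ((q;q)_{L-r} (q;q)_{2r})) F(r,q) = ∑_{j=-∞}^{∞} θ_j(q) q^{j^2} [2L choose L - j]_q. -/

import Mathlib

open Finset

noncomputable section

abbrev F := RatFunc ℚ

/-- The variable `q`, a transcendental element. -/
def q : F := RatFunc.X

/-- `(b;b)_n = ∏_{i=1}^n (1 - b^i)` -/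
def pq (b : F) (n : ℕ) : F := ∏ i ∈ Finset.range n, (1 - b ^ (i + 1))

/-- Gaussian binomial coefficient in base `b`, zero when `k < 0` or `k > a`. -/
def qbin (b : F) (a k : ℤ) : F :=
  if 0 ≤ k ∧ k ≤ a then pq b a.toNat / (pq b k.toNat * pq b (a - k).toNat) else 0

/-- Primed Gaussian binomial: equals 1 when `a < 0` and `k = 0`. -/
def qbin' (b : F) (a k : ℤ) : F :=
  if a < 0 ∧ k = 0 then 1 else qbin b a k

/- ## Auxiliary development -/

lemma one_sub_q_pow_ne_zero (n : ℕ) : (1 : F) - q ^ (n + 1) ≠ 0 := by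
  have hX : (RatFunc.X : F) ^ (n + 1) ≠ 1 := by
    intro h
    have h2 : (algebraMap (Polynomial ℚ) F) ((Polynomial.X : Polynomial ℚ) ^ (n + 1)) =
        (algebraMap (Polynomial ℚ) F) 1 := by
      rw [map_pow, map_one, RatFunc.algebraMap_X, h]
    have h3 : (Polynomial.X : Polynomial ℚ) ^ (n + 1) = 1 :=
      IsFractionRing.injective (Polynomial ℚ) F h2
    have h4 := congrArg Polynomial.natDegree h3
    simp [Polynomial.natDegree_X_pow] at h4
  intro h
  apply hX
  have : (q : F) ^ (n + 1) = 1 := by linear_combination -h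
  simpa [q] using this

lemma pq_ne_zero (n : ℕ) : pq q n ≠ 0 := by
  unfold pq
  apply Finset.prod_ne_zero_iff.2
  intro i _
  exact one_sub_q_pow_ne_zero i

lemma pq_succ (n : ℕ) : pq q (n + 1) = pq q n * (1 - q ^ (n + 1)) := by
  unfold pq
  rw [Finset.prod_range_succ]

/-- Inverse of `pq`. -/
def P (n : ℕ) : F := (pq q n)⁻¹

lemma P_ne_zero (n : ℕ) : P n ≠ 0 := inv_ne_zero (pq_ne_zero n)

lemma P_zero : P 0 = 1 := by simp [P, pq]

lemma P_split (n : ℕ) : P n = (1 - q ^ (n + 1)) * P (n + 1) := by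
  unfold P
  rw [pq_succ]
  rw [mul_inv]
  rw [← mul_assoc, mul_comm (1 - q ^ (n+1)) (pq q n)⁻¹, mul_assoc,
    mul_inv_cancel₀ (one_sub_q_pow_ne_zero n), mul_one]

lemma P_succ (n : ℕ) : P (n + 1) = P n + q ^ (n + 1) * P (n + 1) := by
  linear_combination - P_split n

/-- `f M t = ∑_s q^{s(s+t)} / ((q)_s (q)_{s+t} (q)_{M-s})`. -/
def fsum (M t : ℕ) : F :=
  ∑ s ∈ Finset.range (M + 1), q ^ (s * (s + t)) * (P s * (P (s + t) * P (M - s)))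

/-- The correction sum appearing in the recursion. -/
def Esum (N t : ℕ) : F :=
  ∑ s ∈ Finset.range (N + 1), q ^ (s * (s + t) - s) * (P s * (P (s + t) * P (N - s)))

lemma le_mul_self_add (s t : ℕ) : s ≤ s * (s + t) := by
  rcases Nat.eq_zero_or_pos s with h | h
  · simp [h]
  · calc s = s * 1 := (mul_one s).symm
      _ ≤ s * (s + t) := Nat.mul_le_mul_left s (by omega)

lemma fsum_zero (t : ℕ) : fsum 0 t = P 0 * P (0 + t) := by
  simp [fsum, P_zero]

lemma step1 (M t : ℕ) : fsum (M + 1) t = fsum M t + q ^ (M + 1) * Esum (M + 1) t := by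
  unfold fsum Esum
  rw [Finset.sum_range_succ
        (f := fun s => q ^ (s * (s + t)) * (P s * (P (s + t) * P (M + 1 - s)))),
      Finset.sum_range_succ
        (f := fun s => q ^ (s * (s + t) - s) * (P s * (P (s + t) * P (M + 1 - s))))]
  have hterm : ∀ s ∈ Finset.range (M + 1),
      q ^ (s * (s + t)) * (P s * (P (s + t) * P (M + 1 - s))) =
      q ^ (s * (s + t)) * (P s * (P (s + t) * P (M - s))) +
      q ^ (M + 1) * (q ^ (s * (s + t) - s) * (P s * (P (s + t) * P (M + 1 - s)))) := by
    intro s hs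
    rw [Finset.mem_range] at hs
    have hqq : q ^ (M + 1) * q ^ (s * (s + t) - s) = q ^ (s * (s + t)) * q ^ (M + 1 - s) := by
      rw [← pow_add, ← pow_add]
      congr 1
      have := le_mul_self_add s t
      omega
    have hsub : M + 1 - s = (M - s) + 1 := by omega
    have hsplit : P (M + 1 - s) = P (M - s) + q ^ (M + 1 - s) * P (M + 1 - s) := by
      rw [hsub]; exact P_succ (M - s)
    have expand : q ^ (M + 1) * (q ^ (s * (s + t) - s) * (P s * (P (s + t) * P (M + 1 - s)))) =
        q ^ (s * (s + t)) * q ^ (M + 1 - s) * (P s * (P (s + t) * P (M + 1 - s))) := by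
      rw [← mul_assoc, hqq]
    rw [expand]
    linear_combination (q ^ (s * (s + t)) * P s * P (s + t)) * hsplit
  rw [Finset.sum_congr rfl hterm, Finset.sum_add_distrib]
  have hlast : q ^ ((M + 1) * (M + 1 + t)) *
        (P (M + 1) * (P (M + 1 + t) * P (M + 1 - (M + 1)))) =
      q ^ (M + 1) * (q ^ ((M + 1) * (M + 1 + t) - (M + 1)) *
        (P (M + 1) * (P (M + 1 + t) * P (M + 1 - (M + 1))))) := by
    conv_lhs => rw [show (M + 1) * (M + 1 + t) = (M + 1) + ((M + 1) * (M + 1 + t) - (M + 1)) from by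
          have := le_mul_self_add (M + 1) t; omega]
    rw [pow_add, mul_assoc]
  rw [hlast, mul_add (q ^ (M + 1)), Finset.mul_sum]
  ring

lemma Esum_succ (N t : ℕ) : Esum N (t + 1) = fsum N t + q ^ (t + 1) * fsum N (t + 1) := by
  unfold fsum Esum
  rw [Finset.mul_sum, ← Finset.sum_add_distrib]
  apply Finset.sum_congr rfl
  intro s _
  have hsplit : P (s + (t + 1)) = P (s + t) + q ^ (s + (t + 1)) * P (s + (t + 1)) := by
    have h : s + (t + 1) = (s + t) + 1 := by omega
    rw [h]; exact P_succ (s + t)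
  have hexp1 : s * (s + (t + 1)) - s = s * (s + t) := by
    have h1 : s * (s + (t + 1)) = s * (s + t) + s := by ring
    omega
  rw [hexp1]
  linear_combination (q ^ (s * (s + t)) * P s * P (N - s)) * hsplit

lemma Esum_zero (N : ℕ) : Esum (N + 1) 0 = fsum N 1 + fsum (N + 1) 0 := by
  unfold fsum Esum
  simp only [Nat.add_zero]
  rw [Finset.sum_range_succ' (fun s => q ^ (s * s - s) * (P s * (P s * P (N + 1 - s)))) (N + 1),
      Finset.sum_range_succ' (fun s => q ^ (s * s) * (P s * (P s * P (N + 1 - s)))) (N + 1)]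
  have hterm : ∀ u ∈ Finset.range (N + 1),
      q ^ ((u + 1) * (u + 1) - (u + 1)) * (P (u + 1) * (P (u + 1) * P (N + 1 - (u + 1)))) =
      q ^ (u * (u + 1)) * (P u * (P (u + 1) * P (N - u))) +
      q ^ ((u + 1) * (u + 1)) * (P (u + 1) * (P (u + 1) * P (N + 1 - (u + 1)))) := by
    intro u _
    have hsplit : P (u + 1) = P u + q ^ (u + 1) * P (u + 1) := P_succ u
    have hsub : N + 1 - (u + 1) = N - u := by omega
    have hexp1 : (u + 1) * (u + 1) - (u + 1) = u * (u + 1) := by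
      have h1 : (u + 1) * (u + 1) = u * (u + 1) + (u + 1) := by ring
      omega
    rw [hexp1, hsub]
    linear_combination (q ^ (u * (u + 1)) * P (u + 1) * P (N - u)) * hsplit
  rw [Finset.sum_congr rfl hterm, Finset.sum_add_distrib]
  norm_num
  ring

lemma f_eq : ∀ M t : ℕ, fsum M t = P M * P (M + t) := by
  intro M
  induction M with
  | zero => intro t; exact fsum_zero t
  | succ M ih =>
    intro t
    induction t with
    | zero =>
      have h1 := step1 M 0
      rw [Esum_zero M, ih 0, ih 1] at h1
      simp only [Nat.add_zero] at h1 ⊢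
      have hne : (1 : F) - q ^ (M + 1) ≠ 0 := one_sub_q_pow_ne_zero M
      apply mul_right_cancel₀ hne
      calc fsum (M + 1) 0 * (1 - q ^ (M + 1))
          = P M * P M + q ^ (M + 1) * (P M * P (M + 1)) := by linear_combination h1
        _ = P (M + 1) * P (M + 1) * (1 - q ^ (M + 1)) := by rw [P_split M]; ring
    | succ t iht =>
      have h1 := step1 M (t + 1)
      rw [Esum_succ (M + 1) t, ih (t + 1), iht] at h1
      simp only [show M + (t + 1) = M + t + 1 from by omega,
        show M + 1 + t = M + t + 1 from by omega,
        show M + 1 + (t + 1) = M + t + 2 from by omega] at h1 ⊢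
      have hne : (1 : F) - q ^ (M + 1) * q ^ (t + 1) ≠ 0 := by
        have hpow : q ^ (M + 1) * q ^ (t + 1) = q ^ (M + t + 1 + 1) := by
          rw [← pow_add]; congr 1; omega
        rw [hpow]
        exact one_sub_q_pow_ne_zero (M + t + 1)
      apply mul_right_cancel₀ hne
      calc fsum (M + 1) (t + 1) * (1 - q ^ (M + 1) * q ^ (t + 1))
          = P M * P (M + t + 1) + q ^ (M + 1) * (P (M + 1) * P (M + t + 1)) := by
            linear_combination h1
        _ = P (M + 1) * P (M + t + 2) * (1 - q ^ (M + 1) * q ^ (t + 1)) := by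
            rw [P_split M, P_split (M + t + 1)]; ring

lemma qbin_symm (a k : ℤ) : qbin q a k = qbin q a (a - k) := by
  unfold qbin
  by_cases h : 0 ≤ k ∧ k ≤ a
  · rw [if_pos h, if_pos (by omega : 0 ≤ a - k ∧ a - k ≤ a),
      show a - (a - k) = k from by ring, mul_comm]
  · rw [if_neg h, if_neg (by omega : ¬(0 ≤ a - k ∧ a - k ≤ a))]

lemma qbin_neg {a k : ℤ} (h : k < 0) : qbin q a k = 0 := by
  unfold qbin
  rw [if_neg (by omega)]

lemma qbin_nat (a k : ℕ) (h : k ≤ a) :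
    qbin q (a : ℤ) (k : ℤ) = pq q a / (pq q k * pq q (a - k)) := by
  unfold qbin
  rw [if_pos (by constructor <;> omega)]
  have h1 : ((a : ℤ)).toNat = a := by omega
  have h2 : ((k : ℤ)).toNat = k := by omega
  have h3 : ((a : ℤ) - (k : ℤ)).toNat = a - k := by omega
  rw [h1, h2, h3]

lemma key_nat (L jn : ℕ) :
    ∑ r ∈ Finset.range (L + 1),
        q ^ (r ^ 2) * pq q (2 * L) / (pq q (L - r) * pq q (2 * r)) *
          qbin q (2 * (r : ℤ)) ((r : ℤ) - (jn : ℤ)) =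
    q ^ (jn ^ 2) * qbin q (2 * (L : ℤ)) ((L : ℤ) - (jn : ℤ)) := by
  by_cases hjL : jn ≤ L
  · -- main case
    have h2L : (2 * (L : ℤ)) = ((2 * L : ℕ) : ℤ) := by push_cast; ring
    have hLj : ((L : ℤ) - (jn : ℤ)) = ((L - jn : ℕ) : ℤ) := by omega
    rw [h2L, hLj, qbin_nat (2 * L) (L - jn) (by omega),
      show 2 * L - (L - jn) = (L - jn) + 2 * jn from by omega]
    rw [Finset.range_eq_Ico,
      ← Finset.sum_Ico_consecutive _ (Nat.zero_le jn) (by omega : jn ≤ L + 1)]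
    rw [Finset.sum_eq_zero (fun r hr => by
      rw [Finset.mem_Ico] at hr
      rw [qbin_neg (by omega : (r : ℤ) - (jn : ℤ) < 0), mul_zero]), zero_add]
    rw [Finset.sum_Ico_eq_sum_range]
    rw [show L + 1 - jn = (L - jn) + 1 from by omega]
    have hterm : ∀ s ∈ Finset.range ((L - jn) + 1),
        q ^ ((jn + s) ^ 2) * pq q (2 * L) /
            (pq q (L - (jn + s)) * pq q (2 * (jn + s))) *
          qbin q (2 * ((jn + s : ℕ) : ℤ)) (((jn + s : ℕ) : ℤ) - (jn : ℤ)) =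
        q ^ (jn ^ 2) * pq q (2 * L) *
          (q ^ (s * (s + 2 * jn)) *
            (P s * (P (s + 2 * jn) * P ((L - jn) - s)))) := by
      intro s hs
      rw [Finset.mem_range] at hs
      have e1 : ((jn + s : ℕ) : ℤ) - (jn : ℤ) = ((s : ℕ) : ℤ) := by push_cast; ring
      have e2 : (2 * ((jn + s : ℕ) : ℤ)) = ((2 * (jn + s) : ℕ) : ℤ) := by push_cast; ring
      rw [e1, e2, qbin_nat (2 * (jn + s)) s (by omega)]
      rw [show L - (jn + s) = (L - jn) - s from by omega,
        show 2 * (jn + s) - s = s + 2 * jn from by omega,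
        show (jn + s) ^ 2 = jn ^ 2 + s * (s + 2 * jn) from by ring, pow_add]
      have n1 := pq_ne_zero ((L - jn) - s)
      have n2 := pq_ne_zero (2 * (jn + s))
      have n3 := pq_ne_zero s
      have n4 := pq_ne_zero (s + 2 * jn)
      unfold P
      field_simp
    rw [Finset.sum_congr rfl hterm, ← Finset.mul_sum]
    have hfs : ∑ s ∈ Finset.range ((L - jn) + 1),
        q ^ (s * (s + 2 * jn)) * (P s * (P (s + 2 * jn) * P ((L - jn) - s))) =
        fsum (L - jn) (2 * jn) := rfl
    rw [hfs, f_eq (L - jn) (2 * jn)]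
    have n1 := pq_ne_zero (L - jn)
    have n2 := pq_ne_zero ((L - jn) + 2 * jn)
    unfold P
    field_simp
  · -- jn > L : both sides vanish
    rw [Finset.sum_eq_zero (fun r hr => by
      rw [Finset.mem_range] at hr
      rw [qbin_neg (by omega : (r : ℤ) - (jn : ℤ) < 0), mul_zero])]
    rw [qbin_neg (by omega : (L : ℤ) - (jn : ℤ) < 0), mul_zero]

lemma key (L : ℕ) (j : ℤ) :
    ∑ r ∈ Finset.range (L + 1),
        q ^ (r ^ 2) * pq q (2 * L) / (pq q (L - r) * pq q (2 * r)) *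
          qbin q (2 * (r : ℤ)) ((r : ℤ) - j) =
    q ^ (j ^ 2) * qbin q (2 * (L : ℤ)) ((L : ℤ) - j) := by
  rcases le_or_gt 0 j with hj | hj
  · obtain ⟨jn, rfl⟩ := Int.eq_ofNat_of_zero_le hj
    have hq : (q : F) ^ (((jn : ℤ)) ^ 2) = q ^ (jn ^ 2) := by
      rw [show ((jn : ℤ)) ^ 2 = ((jn ^ 2 : ℕ) : ℤ) from by push_cast; ring, zpow_natCast]
    rw [hq]
    exact key_nat L jn
  · obtain ⟨jn, rfl⟩ : ∃ n : ℕ, j = -(n : ℤ) := ⟨j.natAbs, by omega⟩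
    have hsym : ∀ r : ℕ, qbin q (2 * (r : ℤ)) ((r : ℤ) - (-(jn : ℤ))) =
        qbin q (2 * (r : ℤ)) ((r : ℤ) - (jn : ℤ)) := by
      intro r
      rw [qbin_symm (2 * (r : ℤ)) ((r : ℤ) - (-(jn : ℤ))),
        show 2 * (r : ℤ) - ((r : ℤ) - (-(jn : ℤ))) = (r : ℤ) - (jn : ℤ) from by ring]
    rw [Finset.sum_congr rfl (fun r _ => by rw [hsym r]), hsym L,
      show (-(jn : ℤ)) ^ 2 = ((jn : ℤ)) ^ 2 from by ring]
    have hq : (q : F) ^ (((jn : ℤ)) ^ 2) = q ^ (jn ^ 2) := by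
      rw [show ((jn : ℤ)) ^ 2 = ((jn ^ 2 : ℕ) : ℤ) from by push_cast; ring, zpow_natCast]
    rw [hq]
    exact key_nat L jn

theorem stmt18 (θ : ℤ → Polynomial ℚ) (hθ : (Function.support θ).Finite)
    (G : ℕ → F)
    (hG : ∀ L : ℕ,
      G L = ∑ᶠ j : ℤ, algebraMap (Polynomial ℚ) F (θ j) * qbin q (2 * (L : ℤ)) ((L : ℤ) - j)) :
    ∀ L : ℕ,
      (∑ r ∈ Finset.range (L + 1),
          q ^ (r ^ 2) * pq q (2 * L) / (pq q (L - r) * pq q (2 * r)) * G r) =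
        ∑ᶠ j : ℤ, algebraMap (Polynomial ℚ) F (θ j) * q ^ (j ^ 2) *
          qbin q (2 * (L : ℤ)) ((L : ℤ) - j) := by
  intro L
  classical
  set T : Finset ℤ := hθ.toFinset with hT
  have hmem : ∀ j : ℤ, j ∉ T → θ j = 0 := by
    intro j hj
    by_contra h
    exact hj (by simpa [hT, Set.Finite.mem_toFinset] using h)
  have hGr : ∀ r : ℕ, G r =
      ∑ j ∈ T, algebraMap (Polynomial ℚ) F (θ j) * qbin q (2 * (r : ℤ)) ((r : ℤ) - j) := by
    intro r
    rw [hG r]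
    apply finsum_eq_sum_of_support_subset
    intro j hj
    simp only [Function.mem_support] at hj
    by_contra hjT
    rw [hmem j hjT, map_zero, zero_mul] at hj
    exact hj rfl
  have hRHS : (∑ᶠ j : ℤ, algebraMap (Polynomial ℚ) F (θ j) * q ^ (j ^ 2) *
        qbin q (2 * (L : ℤ)) ((L : ℤ) - j)) =
      ∑ j ∈ T, algebraMap (Polynomial ℚ) F (θ j) * q ^ (j ^ 2) *
        qbin q (2 * (L : ℤ)) ((L : ℤ) - j) := by
    apply finsum_eq_sum_of_support_subset
    intro j hj
    simp only [Function.mem_support] at hj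
    by_contra hjT
    rw [hmem j hjT, map_zero, zero_mul, zero_mul] at hj
    exact hj rfl
  rw [hRHS]
  calc (∑ r ∈ Finset.range (L + 1),
          q ^ (r ^ 2) * pq q (2 * L) / (pq q (L - r) * pq q (2 * r)) * G r)
      = ∑ r ∈ Finset.range (L + 1), ∑ j ∈ T,
          algebraMap (Polynomial ℚ) F (θ j) *
            (q ^ (r ^ 2) * pq q (2 * L) / (pq q (L - r) * pq q (2 * r)) *
              qbin q (2 * (r : ℤ)) ((r : ℤ) - j)) := by
        apply Finset.sum_congr rfl
        intro r _
        rw [hGr r, Finset.mul_sum]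
        apply Finset.sum_congr rfl
        intro j _
        ring
    _ = ∑ j ∈ T, ∑ r ∈ Finset.range (L + 1),
          algebraMap (Polynomial ℚ) F (θ j) *
            (q ^ (r ^ 2) * pq q (2 * L) / (pq q (L - r) * pq q (2 * r)) *
              qbin q (2 * (r : ℤ)) ((r : ℤ) - j)) := Finset.sum_comm
    _ = ∑ j ∈ T, algebraMap (Polynomial ℚ) F (θ j) * q ^ (j ^ 2) *
          qbin q (2 * (L : ℤ)) ((L : ℤ) - j) := by
        apply Finset.sum_congr rfl
        intro j _
        rw [← Finset.mul_sum, key L j, ← mul_assoc]
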